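/- Let H be a cyclic group of order n acting faithfully and irreducibly on V = F_p^d. If two elements h^a and h^b of H afford isomorphic module structures on V (i.e., the map v ↦ action twisted by h^a is F_pH-isomorphic to that by h^b), then a ≡ b·p^k (mod n) for some integer k. -/

import Mathlib

section RepDefs

variable {p : ℕ} {V : Type*} [AddCommGroup V] [Module (ZMod p) V]

/-- `W` is invariant under the subgroup `H ≤ GL(V)`. -/
def SubInvariant (H : Subgroup (V ≃ₗ[ZMod p] V)) (W : Submodule (ZMod p) V) : Prop :=
  ∀ g ∈ H, ∀ v ∈ W, g v ∈ W

/-- `W` is an irreducible `H`-submodule. -/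
def SubIrreducible (H : Subgroup (V ≃ₗ[ZMod p] V)) (W : Submodule (ZMod p) V) : Prop :=
  W ≠ ⊥ ∧ ∀ U : Submodule (ZMod p) V, U ≤ W → SubInvariant H U → U = ⊥ ∨ U = W

/-- `A` and `B` are isomorphic as `H`-modules: some `H`-equivariant linear endomorphism of
`V` maps `A` onto `B` injectively. -/
def SubHIso (H : Subgroup (V ≃ₗ[ZMod p] V)) (A B : Submodule (ZMod p) V) : Prop :=
  ∃ φ : V →ₗ[ZMod p] V, (∀ g ∈ H, ∀ v : V, φ (g v) = g (φ v)) ∧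
    Submodule.map φ A = B ∧ ∀ v ∈ A, φ v = 0 → v = 0

/-- `H` acts fixed-point-freely on `V`. -/
def SubFPF (H : Subgroup (V ≃ₗ[ZMod p] V)) : Prop :=
  ∀ g ∈ H, g ≠ 1 → ∀ v : V, g v = v → v = 0

end RepDefs

open Polynomial

section Helpers

variable {p : ℕ} [Fact p.Prime] {V : Type*} [AddCommGroup V] [Module (ZMod p) V]

lemma aux_comm_symm (τ : V ≃ₗ[ZMod p] V) (f : V →ₗ[ZMod p] V)
    (h : ∀ v, f (τ v) = τ (f v)) (v : V) : f (τ.symm v) = τ.symm (f v) := by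
  have h2 := h (τ.symm v)
  rw [τ.apply_symm_apply] at h2
  rw [h2, τ.symm_apply_apply]

lemma aux_comm_pow (τ : V ≃ₗ[ZMod p] V) (f : V →ₗ[ZMod p] V)
    (h : ∀ v, f (τ v) = τ (f v)) (k : ℕ) (v : V) : f ((τ ^ k) v) = (τ ^ k) (f v) := by
  induction k generalizing v with
  | zero => simp
  | succ k ih =>
    rw [pow_succ]
    calc f ((τ ^ k * τ) v) = f ((τ ^ k) (τ v)) := rfl
    _ = (τ ^ k) (f (τ v)) := ih _
    _ = (τ ^ k) (τ (f v)) := by rw [h]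
    _ = (τ ^ k * τ) (f v) := rfl

lemma aux_comm_zpowers (σ : V ≃ₗ[ZMod p] V) (f : V →ₗ[ZMod p] V)
    (h : ∀ v, f (σ v) = σ (f v)) :
    ∀ g ∈ Subgroup.zpowers σ, ∀ v, f (g v) = g (f v) := by
  intro g hg v
  obtain ⟨k, rfl⟩ := Subgroup.mem_zpowers_iff.mp hg
  cases k with
  | ofNat k => rw [Int.ofNat_eq_coe, zpow_natCast]; exact aux_comm_pow σ f h k v
  | negSucc k =>
    rw [zpow_negSucc]
    have h1 : ∀ w, f ((σ ^ (k + 1)) w) = (σ ^ (k + 1)) (f w) := aux_comm_pow σ f h (k + 1)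
    have h2 : (σ ^ (k + 1))⁻¹ = (σ ^ (k + 1)).symm := rfl
    rw [h2]
    exact aux_comm_symm _ f h1 v

lemma aux_aeval_conj (eqv : V ≃ₗ[ZMod p] V) (f g : Module.End (ZMod p) V)
    (h : ∀ v, eqv (f v) = g (eqv v)) (P : Polynomial (ZMod p)) (v : V) :
    eqv ((aeval f P) v) = (aeval g P) (eqv v) := by
  have hpow : ∀ (k : ℕ) (w : V), eqv ((f ^ k) w) = (g ^ k) (eqv w) := by
    intro k
    induction k with
    | zero => intro w; simp
    | succ k ih =>
      intro w
      calc eqv ((f ^ (k+1)) w) = eqv ((f ^ k) (f w)) := by rw [pow_succ]; rfl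
      _ = (g ^ k) (eqv (f w)) := ih _
      _ = (g ^ k) (g (eqv w)) := by rw [h]
      _ = (g ^ (k+1)) (eqv w) := by rw [pow_succ]; rfl
  rw [aeval_eq_sum_range (R := ZMod p) (p := P) f, aeval_eq_sum_range (R := ZMod p) (p := P) g]
  rw [LinearMap.coe_sum, Finset.sum_apply, LinearMap.coe_sum, Finset.sum_apply, map_sum]
  refine Finset.sum_congr rfl fun i _ => ?_
  rw [LinearMap.smul_apply, LinearMap.smul_apply, map_smul, hpow]

lemma aux_minpoly_conj [Module.Finite (ZMod p) V] (eqv : V ≃ₗ[ZMod p] V)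
    (f g : Module.End (ZMod p) V) (h : ∀ v, eqv (f v) = g (eqv v)) :
    minpoly (ZMod p) f = minpoly (ZMod p) g := by
  have hf : IsIntegral (ZMod p) f := IsIntegral.of_finite _ _
  have hg : IsIntegral (ZMod p) g := IsIntegral.of_finite _ _
  have h' : ∀ v, eqv.symm (g v) = f (eqv.symm v) := by
    intro v
    have h2 := h (eqv.symm v)
    rw [eqv.apply_symm_apply] at h2
    apply eqv.injective
    rw [eqv.apply_symm_apply, h2]
  have d1 : minpoly (ZMod p) f ∣ minpoly (ZMod p) g := by
    apply minpoly.dvd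
    ext v
    have h3 := aux_aeval_conj eqv f g h (minpoly (ZMod p) g) v
    rw [minpoly.aeval] at h3
    simpa using eqv.map_eq_zero_iff.mp (by simpa using h3)
  have d2 : minpoly (ZMod p) g ∣ minpoly (ZMod p) f := by
    apply minpoly.dvd
    ext v
    have h3 := aux_aeval_conj eqv.symm g f h' (minpoly (ZMod p) f) v
    rw [minpoly.aeval] at h3
    simpa using eqv.symm.map_eq_zero_iff.mp (by simpa using h3)
  exact eq_of_monic_of_associated (minpoly.monic hf) (minpoly.monic hg)
    (associated_of_dvd_dvd d1 d2)

lemma aux_prime_field {p : ℕ} [Fact p.Prime] {K : Type*} [Field K] [Algebra (ZMod p) K]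
    (c : K) (hc : c ^ p = c) : c ∈ Set.range (algebraMap (ZMod p) K) := by
  have hp : p.Prime := Fact.out
  classical
  haveI : NeZero p := ⟨hp.ne_zero⟩
  set h : K[X] := X ^ p - X with hh
  have hdlt : (X : K[X]).degree < ((X : K[X]) ^ p).degree := by
    rw [degree_X, degree_X_pow]
    exact_mod_cast hp.one_lt
  have hmon : h.Monic := monic_X_pow_sub (by rw [degree_X]; exact_mod_cast hp.one_lt)
  have hne : h ≠ 0 := hmon.ne_zero
  have hdeg2 : h.degree = p := by
    rw [hh, degree_sub_eq_left_of_degree_lt hdlt, degree_X_pow]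
  have hdeg : h.natDegree = p := natDegree_eq_of_degree_eq_some hdeg2
  set T : Finset K := Finset.image (algebraMap (ZMod p) K) Finset.univ with hT
  by_contra hcr
  have hcT : c ∉ T := by
    intro hmem
    obtain ⟨u, -, hu⟩ := Finset.mem_image.mp hmem
    exact hcr ⟨u, hu⟩
  have hsub : insert c T ⊆ h.roots.toFinset := by
    intro t ht
    rw [Multiset.mem_toFinset, mem_roots hne]
    rcases Finset.mem_insert.mp ht with rfl | htT
    · show h.IsRoot t
      simp [hh, IsRoot, hc]
    · obtain ⟨u, -, rfl⟩ := Finset.mem_image.mp htT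
      show h.IsRoot _
      simp only [hh, IsRoot, eval_sub, eval_pow, eval_X, ← map_pow, ZMod.pow_card, sub_self]
  have hcard1 : (insert c T).card = p + 1 := by
    rw [Finset.card_insert_of_notMem hcT, hT,
      Finset.card_image_of_injective _ (algebraMap (ZMod p) K).injective,
      Finset.card_univ, ZMod.card]
  have hcard2 : (insert c T).card ≤ p := by
    calc (insert c T).card ≤ h.roots.toFinset.card := Finset.card_le_card hsub
    _ ≤ Multiset.card h.roots := Multiset.toFinset_card_le _
    _ ≤ h.natDegree := card_roots' h
    _ = p := hdeg
  omega

end Helpers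

/-- Let `H = ⟨σ⟩` be cyclic of order `n` (with `gcd(n,p) = 1`) acting faithfully and
irreducibly on `V = F_p^d`. If the module structures twisted by `σ^a` and `σ^b` are
isomorphic (an `F_p`-linear equivalence `e` with `e ∘ σ^a = σ^b ∘ e`), then
`a ≡ b·p^k (mod n)` for some `k`. -/
theorem stmt16 (p n a b : ℕ) [Fact p.Prime] (hpn : Nat.Coprime n p)
    (V : Type*) [AddCommGroup V] [Module (ZMod p) V] [Module.Finite (ZMod p) V]
    [Nontrivial V]
    (σ : V ≃ₗ[ZMod p] V) (hord : orderOf σ = n)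
    (hirr : ∀ U : Submodule (ZMod p) V, SubInvariant (Subgroup.zpowers σ) U →
      U = ⊥ ∨ U = ⊤)
    (e : V ≃ₗ[ZMod p] V) (he : ∀ v : V, e ((σ ^ a) v) = (σ ^ b) (e v)) :
    ∃ k : ℕ, a ≡ b * p ^ k [MOD n] := by
  classical
  have hp : p.Prime := Fact.out
  have hn : 0 < n := by
    rcases Nat.eq_zero_or_pos n with h0 | h
    · subst h0
      exact absurd ((Nat.coprime_zero_left p).mp hpn) hp.ne_one
    · exact h
  set σ' : Module.End (ZMod p) V := (σ : V →ₗ[ZMod p] V) with hσ'def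
  have hσ'pow : ∀ (k : ℕ) (v : V), (σ' ^ k) v = (σ ^ k) v := by
    intro k v
    rw [Module.End.pow_apply, LinearEquiv.pow_apply]
    rfl
  have hσ'int : IsIntegral (ZMod p) σ' := IsIntegral.of_finite _ _
  set m : Polynomial (ZMod p) := minpoly (ZMod p) σ' with hm
  have hm0 : m ≠ 0 := minpoly.ne_zero hσ'int
  have hmono : m.Monic := minpoly.monic hσ'int
  haveI : Nontrivial (Module.End (ZMod p) V) := by
    refine ⟨1, 0, fun hcon => ?_⟩
    obtain ⟨v, hv⟩ := exists_ne (0 : V)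
    exact hv (by simpa using LinearMap.congr_fun hcon v)
  have hm_irr : Irreducible m := by
    constructor
    · intro hu
      have h1 : m = 1 := hmono.eq_one_of_isUnit hu
      have h0 := minpoly.aeval (ZMod p) σ'
      rw [← hm, h1, map_one] at h0
      exact one_ne_zero h0
    · intro q r hqr
      have hc : aeval σ' q * σ' = σ' * aeval σ' q := by
        calc aeval σ' q * σ' = aeval σ' q * aeval σ' X := by rw [aeval_X]
        _ = aeval σ' (q * X) := (map_mul _ _ _).symm
        _ = aeval σ' (X * q) := by rw [mul_comm]
        _ = aeval σ' X * aeval σ' q := map_mul _ _ _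
        _ = σ' * aeval σ' q := by rw [aeval_X]
      have hcomm : ∀ v, (aeval σ' q) (σ v) = σ ((aeval σ' q) v) := by
        intro v
        have h3 := DFunLike.congr_fun hc v
        rw [Module.End.mul_apply, Module.End.mul_apply] at h3
        exact h3
      have hinv : SubInvariant (Subgroup.zpowers σ) (LinearMap.ker (aeval σ' q)) := by
        intro g hg v hv
        rw [LinearMap.mem_ker] at hv ⊢
        rw [aux_comm_zpowers σ _ hcomm g hg v, hv, map_zero]
      rcases hirr _ hinv with hbot | htop
      · have hinj : Function.Injective (aeval σ' q) := by
          rwa [← LinearMap.ker_eq_bot]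
        have hr0 : aeval σ' r = 0 := by
          have h0 : aeval σ' q * aeval σ' r = 0 := by
            rw [← map_mul, ← hqr, hm, minpoly.aeval]
          ext v
          have h4 := DFunLike.congr_fun h0 v
          rw [Module.End.mul_apply] at h4
          have h5 : (aeval σ' q) ((aeval σ' r) v) = (aeval σ' q) 0 := by simpa using h4
          simpa using hinj h5
        obtain ⟨s, hs⟩ := minpoly.dvd (ZMod p) σ' hr0
        rw [← hm] at hs
        have hcancel : m * 1 = m * (s * q) := by
          conv_lhs => rw [mul_one, hqr, hs]
          ring
        exact Or.inl (IsUnit.of_mul_eq_one (a := q) s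
          (by rw [mul_comm]; exact (mul_left_cancel₀ hm0 hcancel).symm))
      · have hq0 : aeval σ' q = 0 := by
          ext v
          have hvmem : v ∈ LinearMap.ker (aeval σ' q) := htop ▸ Submodule.mem_top
          simpa using hvmem
        obtain ⟨s, hs⟩ := minpoly.dvd (ZMod p) σ' hq0
        rw [← hm] at hs
        have hcancel : m * 1 = m * (s * r) := by
          conv_lhs => rw [mul_one, hqr, hs]
          ring
        exact Or.inr (IsUnit.of_mul_eq_one (a := r) s
          (by rw [mul_comm]; exact (mul_left_cancel₀ hm0 hcancel).symm))
  haveI hfact : Fact (Irreducible m) := ⟨hm_irr⟩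
  set K := AdjoinRoot m with hK
  have hmaeval : aeval σ' m = 0 := by rw [hm]; exact minpoly.aeval _ _
  have hker : ∀ f ∈ Ideal.span {m},
      (Polynomial.aeval σ').toRingHom f = (0 : Module.End (ZMod p) V) := by
    intro f hf
    rw [Ideal.mem_span_singleton] at hf
    obtain ⟨c, rfl⟩ := hf
    show aeval σ' (m * c) = 0
    rw [map_mul, hmaeval, zero_mul]
  let θ₀ : K →+* Module.End (ZMod p) V :=
    Ideal.Quotient.lift (Ideal.span {m}) (Polynomial.aeval σ').toRingHom hker
  have hθ₀mk : ∀ f : Polynomial (ZMod p), θ₀ (AdjoinRoot.mk m f) = aeval σ' f := fun f =>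
    Ideal.Quotient.lift_mk _ _ _
  let θ : K →ₐ[ZMod p] Module.End (ZMod p) V :=
    { θ₀ with
      commutes' := fun c => by
        show θ₀ (algebraMap (ZMod p) K c) = algebraMap (ZMod p) (Module.End (ZMod p) V) c
        rw [AdjoinRoot.algebraMap_eq]
        show θ₀ (AdjoinRoot.mk m (C c)) = _
        rw [hθ₀mk (C c), aeval_C] }
  have hθinj : Function.Injective θ := RingHom.injective (θ : K →+* Module.End (ZMod p) V)
  set x : K := AdjoinRoot.root m with hx
  have hθx : θ x = σ' := by
    show θ₀ (AdjoinRoot.mk m X) = σ'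
    rw [hθ₀mk X, aeval_X]
  haveI : Module.Finite (ZMod p) K := (AdjoinRoot.powerBasis hm0).finite
  haveI : Finite K := Module.finite_of_finite (ZMod p)
  haveI : Fintype K := Fintype.ofFinite K
  haveI : CharP K p := charP_of_injective_algebraMap (algebraMap (ZMod p) K).injective p
  obtain ⟨D, -, hcard⟩ := FiniteField.card K p
  have hpowmap : ∀ j : ℕ, (σ' ^ j) = ((σ ^ j : V ≃ₗ[ZMod p] V) : V →ₗ[ZMod p] V) := by
    intro j
    ext v
    rw [hσ'pow]
    rfl
  have hσpow_eq : ∀ j : ℕ, σ' ^ j = 1 ↔ σ ^ j = 1 := by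
    intro j
    rw [hpowmap j]
    constructor
    · intro hcoe
      ext v
      exact DFunLike.congr_fun hcoe v
    · intro hcoe
      rw [hcoe]
      rfl
  have hσn : σ ^ n = 1 := by rw [← hord]; exact pow_orderOf_eq_one σ
  have hxn : x ^ n = 1 := by
    apply hθinj
    rw [map_pow, hθx, map_one]
    exact (hσpow_eq n).mpr hσn
  have hx_ord : orderOf x = n := by
    apply Nat.dvd_antisymm (orderOf_dvd_of_pow_eq_one hxn)
    have h1 : x ^ orderOf x = 1 := pow_orderOf_eq_one x
    have h2 : σ ^ orderOf x = 1 := by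
      apply (hσpow_eq _).mp
      have h3 := congrArg θ h1
      rw [map_pow, hθx, map_one] at h3
      exact h3
    rw [← hord]
    exact orderOf_dvd_of_pow_eq_one h2
  have hconj : ∀ v, e ((σ' ^ a) v) = (σ' ^ b) (e v) := by
    intro v
    rw [hσ'pow, hσ'pow]
    exact he v
  have key : minpoly (ZMod p) (x ^ a) = minpoly (ZMod p) (x ^ b) := by
    rw [← minpoly.algHom_eq θ hθinj (x ^ a), ← minpoly.algHom_eq θ hθinj (x ^ b),
      map_pow, map_pow, hθx]
    exact aux_minpoly_conj e _ _ hconj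
  set y : K := x ^ a with hy
  set z : K := x ^ b with hz
  have hD1 : 1 ≤ (D : ℕ) := D.one_le
  have hyD : y ^ (p ^ (D : ℕ)) = y := by rw [← hcard]; exact FiniteField.pow_card y
  set S : Finset K := Finset.image (fun i => y ^ (p ^ i)) (Finset.range (D : ℕ)) with hS
  have hmemS : ∀ i : ℕ, i < (D : ℕ) → y ^ (p ^ i) ∈ S := fun i hi =>
    Finset.mem_image.mpr ⟨i, Finset.mem_range.mpr hi, rfl⟩
  have hSp : Finset.image (fun s => s ^ p) S = S := by
    apply Finset.Subset.antisymm
    · intro t ht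
      obtain ⟨s, hsS, rfl⟩ := Finset.mem_image.mp ht
      obtain ⟨i, hi, rfl⟩ := Finset.mem_image.mp hsS
      rw [Finset.mem_range] at hi
      rw [← pow_mul, ← pow_succ]
      rcases Nat.lt_or_ge (i + 1) (D : ℕ) with hlt | hge
      · exact hmemS _ hlt
      · have hiD : i + 1 = (D : ℕ) := by omega
        rw [hiD, hyD]
        simpa using hmemS 0 (by omega)
    · intro t ht
      obtain ⟨i, hi, rfl⟩ := Finset.mem_image.mp ht
      rw [Finset.mem_range] at hi
      apply Finset.mem_image.mpr
      cases i with
      | zero =>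
        refine ⟨y ^ (p ^ ((D : ℕ) - 1)), hmemS _ (by omega), ?_⟩
        rw [← pow_mul, ← pow_succ, Nat.sub_add_cancel hD1, hyD, pow_zero, pow_one]
      | succ j =>
        exact ⟨y ^ (p ^ j), hmemS j (by omega), by rw [← pow_mul, ← pow_succ]⟩
  set g : K[X] := ∏ s ∈ S, (X - C s) with hg
  have hgmap : g.map (frobenius K p) = g := by
    rw [hg, Polynomial.map_prod]
    simp only [Polynomial.map_sub, map_X, map_C]
    have himg : ∏ t ∈ Finset.image (fun s : K => s ^ p) S, (X - C t)
        = ∏ s ∈ S, (X - C (s ^ p)) :=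
      Finset.prod_image (fun u _ w _ huw =>
        frobenius_inj K p (by rw [frobenius_def, frobenius_def]; exact huw))
    calc ∏ s ∈ S, (X - C (frobenius K p s)) = ∏ s ∈ S, (X - C (s ^ p)) := by
          simp [frobenius_def]
    _ = ∏ t ∈ Finset.image (fun s : K => s ^ p) S, (X - C t) := himg.symm
    _ = ∏ s ∈ S, (X - C s) := by rw [hSp]
  have hcoeff : ∀ j, g.coeff j ∈ Set.range (algebraMap (ZMod p) K) := by
    intro j
    apply aux_prime_field
    have hcc := congrArg (fun q => Polynomial.coeff q j) hgmap
    simpa [Polynomial.coeff_map, frobenius_def] using hcc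
  obtain ⟨g₀, hg₀⟩ := (Polynomial.mem_lifts _).mp
    ((Polynomial.lifts_iff_coeff_lifts g).mpr hcoeff)
  have hyS : y ∈ S := by simpa using hmemS 0 (by omega)
  have hgy : g.eval y = 0 := by
    rw [hg, Polynomial.eval_prod]
    exact Finset.prod_eq_zero hyS (by simp)
  have hay : aeval y g₀ = 0 := by
    rw [Polynomial.aeval_def, ← Polynomial.eval_map, hg₀, hgy]
  have hdvd : minpoly (ZMod p) y ∣ g₀ := minpoly.dvd _ _ hay
  have haz : aeval z g₀ = 0 := by
    obtain ⟨t, ht⟩ := key ▸ hdvd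
    rw [ht, map_mul, minpoly.aeval, zero_mul]
  have hgz : g.eval z = 0 := by
    rw [← hg₀, Polynomial.eval_map, ← Polynomial.aeval_def]
    exact haz
  obtain ⟨s, hsS, hzero⟩ := Finset.prod_eq_zero_iff.mp
    (by rw [hg, Polynomial.eval_prod] at hgz; exact hgz)
  obtain ⟨kk, hk, rfl⟩ := Finset.mem_image.mp hsS
  rw [Polynomial.eval_sub, Polynomial.eval_X, Polynomial.eval_C, sub_eq_zero] at hzero
  obtain ⟨u, hu⟩ := IsUnit.of_pow_eq_one hxn hn.ne'
  have hu_ord : orderOf u = n := by rw [← hx_ord, ← hu, orderOf_units]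
  have hup : u ^ b = u ^ (a * p ^ kk) := by
    apply Units.ext
    rw [Units.val_pow_eq_pow_val, Units.val_pow_eq_pow_val, hu]
    calc x ^ b = z := hz.symm
    _ = y ^ (p ^ kk) := hzero
    _ = x ^ (a * p ^ kk) := by rw [hy, ← pow_mul]
  have hmod : b ≡ a * p ^ kk [MOD n] := by
    rw [← hu_ord]
    exact pow_eq_pow_iff_modEq.mp hup
  set t := n.totient with htt
  have ht : 0 < t := Nat.totient_pos.mpr hn
  have he1 : p ^ t ≡ 1 [MOD n] := Nat.ModEq.pow_totient hpn.symm
  refine ⟨kk * (t - 1), ?_⟩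
  have harith : kk + kk * (t - 1) = t * kk := by
    conv_rhs => rw [← Nat.succ_pred_eq_of_pos ht, Nat.succ_eq_add_one, Nat.pred_eq_sub_one]
    ring
  have h4 : a * p ^ kk * p ^ (kk * (t - 1)) = a * (p ^ t) ^ kk := by
    rw [mul_assoc, ← pow_add, harith, pow_mul]
  have h6 : b * p ^ (kk * (t - 1)) ≡ a [MOD n] := by
    calc b * p ^ (kk * (t - 1)) ≡ a * p ^ kk * p ^ (kk * (t - 1)) [MOD n] := hmod.mul_right _
    _ = a * (p ^ t) ^ kk := h4
    _ ≡ a * 1 ^ kk [MOD n] := (he1.pow kk).mul_left a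
    _ = a := by ring
  exact h6.symm
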